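/- Let f : ℝ → ℝ be differentiable on all of ℝ. Then the mean value theorem holds on every hyperreal interval: for all hyperreals a b : ℝ* with a < b, there exists a hyperreal c : ℝ* with a < c and c < b such that (Filter.Germ.map f) b - (Filter.Germ.map f) a = (b - a) * (Filter.Germ.map (deriv f)) c. -/

import Mathlib

/-- The natural extension `*f : ℝ* → ℝ*` of a real function `f : ℝ → ℝ`,
given by `Filter.Germ.map f`. -/
noncomputable def starMap (f : ℝ → ℝ) : ℝ* → ℝ* := Filter.Germ.map f

/-- The mean value theorem transfers to arbitrary hyperreal intervals for the
natural extension of an everywhere differentiable real function. -/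
lemma starMap_ofSeq (g : ℝ → ℝ) (u : ℕ → ℝ) :
    starMap g (Hyperreal.ofSeq u) = Hyperreal.ofSeq (g ∘ u) := rfl

lemma ofSeq_sub' (x y : ℕ → ℝ) :
    Hyperreal.ofSeq x - Hyperreal.ofSeq y = Hyperreal.ofSeq (x - y) := rfl

lemma ofSeq_mul' (x y : ℕ → ℝ) :
    Hyperreal.ofSeq x * Hyperreal.ofSeq y = Hyperreal.ofSeq (x * y) := rfl

lemma ofSeq_eq_ofSeq {x y : ℕ → ℝ} :
    Hyperreal.ofSeq x = Hyperreal.ofSeq y ↔ ∀ᶠ n in Filter.hyperfilter ℕ, x n = y n :=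
  Filter.Germ.coe_eq

theorem stmt_10 (f : ℝ → ℝ) (hf : Differentiable ℝ f) :
    ∀ a b : ℝ*, a < b →
      ∃ c : ℝ*, a < c ∧ c < b ∧
        starMap f b - starMap f a = (b - a) * starMap (deriv f) c := by
  intro a b hab
  obtain ⟨u, rfl⟩ := Hyperreal.ofSeq_surjective a
  obtain ⟨v, rfl⟩ := Hyperreal.ofSeq_surjective b
  rw [Hyperreal.ofSeq_lt_ofSeq] at hab
  have key : ∀ n, u n < v n → ∃ c ∈ Set.Ioo (u n) (v n),
      deriv f c = (f (v n) - f (u n)) / (v n - u n) := fun n h =>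
    exists_deriv_eq_slope f h hf.continuous.continuousOn hf.differentiableOn
  classical
  set c : ℕ → ℝ := fun n => if h : u n < v n then (key n h).choose else 0 with hc
  have hspec : ∀ n, u n < v n → c n ∈ Set.Ioo (u n) (v n) ∧
      deriv f (c n) = (f (v n) - f (u n)) / (v n - u n) := by
    intro n h
    simp only [hc, dif_pos h]
    exact ⟨(key n h).choose_spec.1, (key n h).choose_spec.2⟩
  refine ⟨Hyperreal.ofSeq c, ?_, ?_, ?_⟩
  · exact Hyperreal.ofSeq_lt_ofSeq.mpr <| hab.mono fun n h => (hspec n h).1.1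
  · exact Hyperreal.ofSeq_lt_ofSeq.mpr <| hab.mono fun n h => (hspec n h).1.2
  · rw [starMap_ofSeq, starMap_ofSeq, starMap_ofSeq, ofSeq_sub', ofSeq_sub',
      ofSeq_mul', ofSeq_eq_ofSeq]
    refine hab.mono fun n h => ?_
    have hne : v n - u n ≠ 0 := sub_ne_zero.mpr h.ne'
    have hd := (hspec n h).2
    simp only [Pi.sub_apply, Pi.mul_apply, Function.comp_apply, hd]
    field_simp
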